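/- The centered indicator random variable ξ_p with P(ξ_p = 1-p) = p and P(ξ_p = -p) = 1-p, for p ∈ (0,1), p ≠ 1/2, has subgaussian norm ‖ξ_p‖_Sub = sqrt((1-2p)/(2 ln((1-p)/p))). -/

import Mathlib

open MeasureTheory Real Set


/-- `sinh x < x * cosh x` for positive `x`. -/
lemma sinh_lt_mul_cosh {x : ℝ} (hx : 0 < x) : Real.sinh x < x * Real.cosh x := by
  have hmono : StrictMonoOn (fun y => y * Real.cosh y - Real.sinh y) (Set.Ici (0:ℝ)) := by
    apply strictMonoOn_of_deriv_pos (convex_Ici 0)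
    · fun_prop
    · intro y hy
      rw [interior_Ici] at hy
      have h0 := ((hasDerivAt_id y).mul (Real.hasDerivAt_cosh y)).sub (Real.hasDerivAt_sinh y)
      have hd : HasDerivAt (fun y => y * Real.cosh y - Real.sinh y) (y * Real.sinh y) y := by
        refine h0.congr_deriv ?_
        rw [id_eq]; ring
      rw [hd.deriv]
      have : 0 < Real.sinh y := by
        have := Real.self_lt_sinh_iff.2 (Set.mem_Ioi.1 hy)
        linarith [Set.mem_Ioi.1 hy]
      exact mul_pos hy this
  have := hmono (Set.self_mem_Ici) (Set.mem_Ici.2 hx.le) hx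
  simpa using this

lemma quad_nonneg_left {a b d v w m : ℝ} (ha : 0 ≤ a) (hvw : v ≤ w) (hwm : w < m)
    (hw : 0 ≤ a*w^2 + b*w + d) (hm : a*m^2 + b*m + d < 0) : 0 ≤ a*v^2 + b*v + d := by
  by_contra hv
  push_neg at hv
  nlinarith [mul_pos (sub_pos.2 hwm) (by linarith : (0:ℝ) < -(a*v^2 + b*v + d)),
    mul_nonneg (by linarith : (0:ℝ) ≤ m - v) hw,
    mul_nonneg (by linarith : (0:ℝ) ≤ w - v) (by linarith : (0:ℝ) ≤ -(a*m^2 + b*m + d)),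
    mul_nonneg ha (mul_nonneg (by linarith : (0:ℝ) ≤ m - w)
      (mul_nonneg (by linarith : (0:ℝ) ≤ w - v) (by linarith : (0:ℝ) ≤ m - v)))]

lemma quad_nonneg_right {a b d v w m : ℝ} (ha : 0 ≤ a) (hmw : m < w) (hwv : w ≤ v)
    (hw : 0 ≤ a*w^2 + b*w + d) (hm : a*m^2 + b*m + d < 0) : 0 ≤ a*v^2 + b*v + d := by
  by_contra hv
  push_neg at hv
  nlinarith [mul_pos (sub_pos.2 hmw) (by linarith : (0:ℝ) < -(a*v^2 + b*v + d)),
    mul_nonneg (by linarith : (0:ℝ) ≤ v - m) hw,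
    mul_nonneg (by linarith : (0:ℝ) ≤ v - w) (by linarith : (0:ℝ) ≤ -(a*m^2 + b*m + d)),
    mul_nonneg ha (mul_nonneg (by linarith : (0:ℝ) ≤ w - m)
      (mul_nonneg (by linarith : (0:ℝ) ≤ v - w) (by linarith : (0:ℝ) ≤ v - m)))]

set_option maxHeartbeats 2000000 in
lemma ks_nonneg {p c L : ℝ} (hp0 : 0 < p) (hplt : p < 1/2) (hL : 0 < L)
    (hEL : Real.exp L = (1-p)/p) (hcL : 4*c*L = 1 - 2*p) (hcpos : 0 < c)
    (C1 : p*(1-p) < 2*c) (C2 : 8*c < 1) (C3 : 4*c < 1-p) (C4 : p < 4*c) (x : ℝ) :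
    0 ≤ c*x^2 + p*x - Real.log (1 - p + p*Real.exp x) := by
  have h1p : (0:ℝ) < 1 - p := by linarith
  set E : ℝ → ℝ := fun y => 1 - p + p * Real.exp y with hEdef
  have hEpos : ∀ y, 0 < E y := fun y => by
    have := Real.exp_pos y; simp only [hEdef]; nlinarith
  set ψ : ℝ → ℝ := fun u => (2*c*p^2)*u^2 + (4*c*p*(1-p) - p*(1-p))*u + 2*c*(1-p)^2 with hψdef
  set F : ℝ → ℝ := fun y => c*y^2 + p*y - Real.log (E y) with hFdef
  set G : ℝ → ℝ := fun y => 2*c*y + p - p*Real.exp y/(E y) with hGdef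
  -- derivatives
  have hE' : ∀ y, HasDerivAt E (p * Real.exp y) y := fun y =>
    ((Real.hasDerivAt_exp y).const_mul p).const_add (1-p)
  have hF' : ∀ y, HasDerivAt F (G y) y := by
    intro y
    have h := (((hasDerivAt_pow 2 y).const_mul c).add ((hasDerivAt_id y).const_mul p)).sub
      ((hE' y).log (hEpos y).ne')
    refine h.congr_deriv ?_
    simp [hGdef, id_eq]
    ring
  have hG' : ∀ y, HasDerivAt G (ψ (Real.exp y) / (E y)^2) y := by
    intro y
    have h := (((hasDerivAt_id y).const_mul (2*c)).add_const p).sub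
      (((Real.hasDerivAt_exp y).const_mul p).div (hE' y) (hEpos y).ne')
    refine h.congr_deriv ?_
    have h2 := (hEpos y).ne'
    simp only [hψdef, hEdef, id_eq] at *
    field_simp
    ring
  have hFc : Continuous F := by
    rw [continuous_iff_continuousAt]; exact fun y => (hF' y).differentiableAt.continuousAt
  have hGc : Continuous G := by
    rw [continuous_iff_continuousAt]; exact fun y => (hG' y).differentiableAt.continuousAt
  have hderivF : ∀ y, deriv F y = G y := fun y => (hF' y).deriv
  have hderivG : ∀ y, deriv G y = ψ (Real.exp y) / (E y)^2 := fun y => (hG' y).deriv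
  -- special values
  have hE0 : E 0 = 1 := by simp [hEdef]
  have hF0 : F 0 = 0 := by simp [hFdef, hE0]
  have hG0 : G 0 = 0 := by simp [hGdef, hE0]
  have hexp2L : Real.exp (2*L) = ((1-p)/p)^2 := by
    rw [two_mul, Real.exp_add, hEL]; ring
  have hE2L : E (2*L) = (1-p)/p := by
    simp only [hEdef, hexp2L]; field_simp; ring
  have hlogm : Real.log ((1-p)/p) = L := by rw [← hEL, Real.log_exp]
  have hF2L : F (2*L) = 0 := by
    simp only [hFdef, hE2L, hlogm]
    linear_combination L * hcL
  have hG2L : G (2*L) = 0 := by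
    simp only [hGdef, hexp2L, hE2L]
    field_simp
    linear_combination hcL
  have hL2pos : 0 < 2*L := by linarith
  -- psi facts
  have hψform : ∀ u, ψ u = 2*c*(1-p+p*u)^2 - p*(1-p)*u := by
    intro u; simp only [hψdef]; ring
  have hψm : ψ ((1-p)/p) < 0 := by
    rw [hψform]
    have e1 : 1 - p + p*((1-p)/p) = 2*(1-p) := by field_simp; ring
    have e2 : p*(1-p)*((1-p)/p) = (1-p)^2 := by field_simp
    rw [e1, e2]
    nlinarith [mul_pos h1p h1p]
  have pA : ∀ u, 0 < u → u ≤ 1 → 0 < ψ u := by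
    intro u hu hu1
    simp only [hψdef]
    linarith [C1, mul_nonneg (mul_nonneg hp0.le (by linarith : (0:ℝ) ≤ (1-p) - 4*c))
        (by linarith : (0:ℝ) ≤ 1 - u),
      mul_nonneg (mul_nonneg hcpos.le (sq_nonneg p)) (sq_nonneg (u-1))]
  have pB : ∀ u, (1-p)^2 ≤ p^2 * u → 0 < ψ u := by
    intro u hu
    have haux : 0 < p^2 * ψ u := by
      simp only [hψdef]
      linarith [mul_pos (mul_pos h1p h1p) (by linarith : (0:ℝ) < 2*c - p*(1-p)),
        mul_nonneg (by linarith : (0:ℝ) ≤ p^2*u - (1-p)^2)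
          (mul_nonneg h1p.le (by linarith : (0:ℝ) ≤ 4*c - p)),
        mul_nonneg hcpos.le (sq_nonneg (p^2*u - (1-p)^2))]
    by_contra h
    push_neg at h
    have h2 : p^2 * ψ u ≤ 0 := mul_nonpos_of_nonneg_of_nonpos (sq_nonneg p) h
    linarith
  -- Region x ≤ 0
  have hreg1 : ∀ y ≤ 0, 0 ≤ F y := by
    have hGmono1 : MonotoneOn G (Iic 0) := by
      apply monotoneOn_of_deriv_nonneg (convex_Iic 0) hGc.continuousOn
        (fun y _ => (hG' y).differentiableAt.differentiableWithinAt)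
      intro y hy
      rw [hderivG y, interior_Iic] at *
      exact le_of_lt (div_pos (pA _ (Real.exp_pos y)
        (Real.exp_le_one_iff.2 (le_of_lt hy))) (pow_pos (hEpos y) 2))
    have hGle1 : ∀ y ≤ 0, G y ≤ 0 := by
      intro y hy
      have := hGmono1 (mem_Iic.2 hy) (mem_Iic.2 le_rfl) hy
      rwa [hG0] at this
    have hFanti1 : AntitoneOn F (Iic 0) := by
      apply antitoneOn_of_deriv_nonpos (convex_Iic 0) hFc.continuousOn
        (fun y _ => (hF' y).differentiableAt.differentiableWithinAt)
      intro y hy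
      rw [hderivF y]
      rw [interior_Iic] at hy
      exact hGle1 y hy.le
    intro y hy
    have := hFanti1 (mem_Iic.2 hy) (mem_Iic.2 le_rfl) hy
    rw [hF0] at this
    linarith
  -- Region x ≥ 2L
  have hp2exp : ∀ y, 2*L ≤ y → (1-p)^2 ≤ p^2 * Real.exp y := by
    intro y hy
    have h0 : p^2 * Real.exp (2*L) = (1-p)^2 := by
      rw [hexp2L]; field_simp
    calc (1-p)^2 = p^2 * Real.exp (2*L) := h0.symm
    _ ≤ p^2 * Real.exp y := by
        have := Real.exp_le_exp.2 hy
        nlinarith [sq_nonneg p]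
  have hreg2 : ∀ y, 2*L ≤ y → 0 ≤ F y := by
    have hGmono2 : MonotoneOn G (Ici (2*L)) := by
      apply monotoneOn_of_deriv_nonneg (convex_Ici _) hGc.continuousOn
        (fun y _ => (hG' y).differentiableAt.differentiableWithinAt)
      intro y hy
      rw [hderivG y]
      rw [interior_Ici] at hy
      exact le_of_lt (div_pos (pB _ (hp2exp y hy.le)) (pow_pos (hEpos y) 2))
    have hGge2 : ∀ y, 2*L ≤ y → 0 ≤ G y := by
      intro y hy
      have := hGmono2 (mem_Ici.2 le_rfl) (mem_Ici.2 hy) hy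
      rwa [hG2L] at this
    have hFmono2 : MonotoneOn F (Ici (2*L)) := by
      apply monotoneOn_of_deriv_nonneg (convex_Ici _) hFc.continuousOn
        (fun y _ => (hF' y).differentiableAt.differentiableWithinAt)
      intro y hy
      rw [hderivF y]
      rw [interior_Ici] at hy
      exact hGge2 y hy.le
    intro y hy
    have := hFmono2 (mem_Ici.2 le_rfl) (mem_Ici.2 hy) hy
    rw [hF2L] at this
    linarith
  -- Region [0, 2L]
  have hreg3 : ∀ y ∈ Icc 0 (2*L), 0 ≤ F y := by
    obtain ⟨x₀, hx₀mem, hx₀min⟩ := (isCompact_Icc (a := (0:ℝ)) (b := 2*L)).exists_isMinOn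
      (nonempty_Icc.2 (by linarith)) hFc.continuousOn
    have hsuff : 0 ≤ F x₀ := by
      rcases eq_or_lt_of_le hx₀mem.1 with h0 | h0
      · simp [← h0, hF0]
      rcases eq_or_lt_of_le hx₀mem.2 with h2L | h2L
      · simp [h2L, hF2L]
      -- interior minimum
      have hloc : IsLocalMin F x₀ := hx₀min.isLocalMin (Icc_mem_nhds h0 h2L)
      have hGx₀ : G x₀ = 0 := hloc.hasDerivAt_eq_zero (hF' x₀)
      by_cases hψx : 0 ≤ ψ (Real.exp x₀)
      · have hx₀L : x₀ ≠ L := by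
          intro h
          rw [h, hEL] at hψx
          linarith
        rcases lt_or_gt_of_ne hx₀L with hlt | hgt
        · -- x₀ < L
          have hψy : ∀ z ∈ Icc (0:ℝ) x₀, 0 ≤ ψ (Real.exp z) := by
            intro z hz
            rw [hψform]
            have h' : 0 ≤ 2*c*p^2*(Real.exp z)^2 + (4*c*p*(1-p) - p*(1-p))*(Real.exp z)
                + 2*c*(1-p)^2 := by
              apply quad_nonneg_left (w := Real.exp x₀) (m := (1-p)/p)
              · positivity
              · exact Real.exp_le_exp.2 hz.2
              · rw [← hEL]; exact Real.exp_lt_exp.2 hlt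
              · have := hψx; rw [hψform] at this; linarith [this]
              · have := hψm; rw [hψform] at this; linarith [this]
            linarith [h']
          have hGmono : MonotoneOn G (Icc 0 x₀) := by
            apply monotoneOn_of_deriv_nonneg (convex_Icc _ _) hGc.continuousOn
              (fun z _ => (hG' z).differentiableAt.differentiableWithinAt)
            intro z hz
            rw [hderivG z]
            exact div_nonneg (hψy z (interior_subset hz)) (sq_nonneg _)
          have hGge : ∀ z ∈ Icc (0:ℝ) x₀, 0 ≤ G z := by
            intro z hz
            have := hGmono (left_mem_Icc.2 (hz.1.trans hz.2)) hz hz.1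
            rwa [hG0] at this
          have hFmono : MonotoneOn F (Icc 0 x₀) := by
            apply monotoneOn_of_deriv_nonneg (convex_Icc _ _) hFc.continuousOn
              (fun z _ => (hF' z).differentiableAt.differentiableWithinAt)
            intro z hz
            rw [hderivF z]
            exact hGge z (interior_subset hz)
          have := hFmono (left_mem_Icc.2 h0.le) (right_mem_Icc.2 h0.le) h0.le
          rwa [hF0] at this
        · -- L < x₀
          have hψy : ∀ z ∈ Icc x₀ (2*L), 0 ≤ ψ (Real.exp z) := by
            intro z hz
            rw [hψform]
            have h' : 0 ≤ 2*c*p^2*(Real.exp z)^2 + (4*c*p*(1-p) - p*(1-p))*(Real.exp z)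
                + 2*c*(1-p)^2 := by
              apply quad_nonneg_right (w := Real.exp x₀) (m := (1-p)/p)
              · positivity
              · rw [← hEL]; exact Real.exp_lt_exp.2 hgt
              · exact Real.exp_le_exp.2 hz.1
              · have := hψx; rw [hψform] at this; linarith [this]
              · have := hψm; rw [hψform] at this; linarith [this]
            linarith [h']
          have hGmono : MonotoneOn G (Icc x₀ (2*L)) := by
            apply monotoneOn_of_deriv_nonneg (convex_Icc _ _) hGc.continuousOn
              (fun z _ => (hG' z).differentiableAt.differentiableWithinAt)
            intro z hz
            rw [hderivG z]
            exact div_nonneg (hψy z (interior_subset hz)) (sq_nonneg _)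
          have hGle : ∀ z ∈ Icc x₀ (2*L), G z ≤ 0 := by
            intro z hz
            have := hGmono hz (right_mem_Icc.2 (hz.1.trans hz.2)) hz.2
            rwa [hG2L] at this
          have hFanti : AntitoneOn F (Icc x₀ (2*L)) := by
            apply antitoneOn_of_deriv_nonpos (convex_Icc _ _) hFc.continuousOn
              (fun z _ => (hF' z).differentiableAt.differentiableWithinAt)
            intro z hz
            rw [hderivF z]
            exact hGle z (interior_subset hz)
          have := hFanti (left_mem_Icc.2 h2L.le) (right_mem_Icc.2 h2L.le) h2L.le
          rwa [hF2L] at this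
      · -- psi negative at x₀ : contradiction with minimality
        push_neg at hψx
        exfalso
        have hcontD : Continuous fun y => ψ (Real.exp y) / (E y)^2 := by
          apply Continuous.div
          · simp only [hψdef]; fun_prop
          · simp only [hEdef]; fun_prop
          · exact fun y => (pow_pos (hEpos y) 2).ne'
        have hU : IsOpen {y : ℝ | ψ (Real.exp y) / (E y)^2 < 0} :=
          isOpen_lt hcontD continuous_const
        have hx₀U : x₀ ∈ {y : ℝ | ψ (Real.exp y) / (E y)^2 < 0} := by
          exact div_neg_of_neg_of_pos hψx (pow_pos (hEpos x₀) 2)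
        obtain ⟨ε, hε, hball⟩ := Metric.isOpen_iff.1 hU x₀ hx₀U
        set a := x₀ - min ε x₀ / 2 with hadef
        have hmin' : 0 < min ε x₀ := lt_min hε h0
        have ha1 : a < x₀ := by simp only [hadef]; linarith
        have ha0 : 0 < a := by
          simp only [hadef]
          have : min ε x₀ ≤ x₀ := min_le_right _ _
          linarith
        have hsub : Icc a x₀ ⊆ Metric.ball x₀ ε := by
          intro z hz
          rw [Metric.mem_ball, Real.dist_eq, abs_lt]
          constructor
          · have : min ε x₀ ≤ ε := min_le_left _ _
            simp only [hadef] at hz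
            have := hz.1
            linarith
          · linarith [hz.2, hε]
        have hGanti : StrictAntiOn G (Icc a x₀) := by
          apply strictAntiOn_of_deriv_neg (convex_Icc _ _) hGc.continuousOn
          intro z hz
          rw [hderivG z]
          have : z ∈ Metric.ball x₀ ε := hsub (mem_of_mem_of_subset hz
            (by rw [interior_Icc]; exact Ioo_subset_Icc_self))
          exact hball this
        have hGpos : ∀ z ∈ Ico a x₀, 0 < G z := by
          intro z hz
          have := hGanti ⟨hz.1, hz.2.le⟩ (right_mem_Icc.2 ha1.le) hz.2
          rw [hGx₀] at this
          linarith
        have hFs : StrictMonoOn F (Icc a x₀) := by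
          apply strictMonoOn_of_deriv_pos (convex_Icc _ _) hFc.continuousOn
          intro z hz
          rw [hderivF z]
          rw [interior_Icc] at hz
          exact hGpos z ⟨hz.1.le, hz.2⟩
        have hlt : F a < F x₀ := hFs (left_mem_Icc.2 ha1.le) (right_mem_Icc.2 ha1.le) ha1
        have hge : F x₀ ≤ F a := isMinOn_iff.1 hx₀min a ⟨ha0.le, by linarith⟩
        linarith
    intro y hy
    exact hsuff.trans (isMinOn_iff.1 hx₀min y hy)
  -- combine
  have : 0 ≤ F x := by
    rcases le_or_gt x 0 with h | h
    · exact hreg1 x h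
    rcases le_or_gt (2*L) x with h' | h'
    · exact hreg2 x h'
    · exact hreg3 x ⟨h.le, h'.le⟩
  simpa [hFdef, hEdef] using this

variable {p : ℝ}

lemma ks_core (hp0 : 0 < p) (hplt : p < 1/2) (x : ℝ) :
    Real.log (1 - p + p * Real.exp x) - p * x ≤
      x ^ 2 * ((1 - 2*p) / (4 * Real.log ((1-p)/p))) := by
  have h1p : (0:ℝ) < 1 - p := by linarith
  have htgt : (1:ℝ) < (1-p)/p := by rw [lt_div_iff₀ hp0]; linarith
  set L : ℝ := Real.log ((1-p)/p) with hLdef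
  have hL : 0 < L := Real.log_pos htgt
  have hEL : Real.exp L = (1-p)/p := Real.exp_log (by positivity)
  have hENL : Real.exp (-L) = p/(1-p) := by
    rw [Real.exp_neg, hEL, inv_div]
  set c : ℝ := (1 - 2*p) / (4 * L) with hcdef
  have hcL : 4 * c * L = 1 - 2*p := by
    rw [hcdef]; field_simp
  have hcpos : 0 < c := div_pos (by linarith) (by linarith)
  have h1 : 2*p*(1-p)*L < 1 - 2*p := by
    have h := Real.self_lt_sinh_iff.2 hL
    rw [Real.sinh_eq, hEL, hENL] at h
    have e1 : ((1-p)/p - p/(1-p))/2 = (1-2*p)/(p*(1-p)*2) := by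
      field_simp; ring
    rw [e1] at h
    rw [lt_div_iff₀ (by positivity)] at h
    nlinarith
  have h2 : 2*(1 - 2*p) < L := by
    have hs := sinh_lt_mul_cosh (x := L/2) (by linarith)
    rw [Real.sinh_eq, Real.cosh_eq] at hs
    have he : Real.exp (L/2) * Real.exp (-(L/2)) = 1 := by
      rw [← Real.exp_add]; simp
    have he2 : Real.exp (L/2) * Real.exp (L/2) = (1-p)/p := by
      rw [← Real.exp_add, ← hEL]; ring_nf
    have hepos : 0 < Real.exp (L/2) := Real.exp_pos _
    have key : 2*((1-p)/p - 1) < L * ((1-p)/p + 1) := by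
      nlinarith [hs, he, he2, hepos]
    field_simp at key
    nlinarith
  have h3 : 1 - 2*p < (1-p)*L := by
    have h := Real.add_one_lt_exp (x := -L) (by linarith)
    rw [hENL, lt_div_iff₀ h1p] at h
    nlinarith
  have h4 : p*L < 1 - 2*p := by
    have h := Real.log_lt_sub_one_of_pos (x := (1-p)/p) (by positivity) (by linarith [htgt])
    rw [← hLdef, div_sub_one hp0.ne', lt_div_iff₀ hp0] at h
    nlinarith
  have C1 : p*(1-p) < 2*c := by nlinarith [h1, hcL, hL]
  have C2 : 8*c < 1 := by nlinarith [h2, hcL, hL]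
  have C3 : 4*c < 1 - p := by nlinarith [h3, hcL, hL]
  have C4 : p < 4*c := by nlinarith [h4, hcL, hL]
  have h := ks_nonneg hp0 hplt hL hEL hcL hcpos C1 C2 C3 C4 x
  linarith

lemma ks_general (hp0 : 0 < p) (hp1 : p < 1) (hp2 : p ≠ 1/2) (x : ℝ) :
    Real.log (1 - p + p * Real.exp x) - p * x ≤
      x ^ 2 * ((1 - 2*p) / (4 * Real.log ((1-p)/p))) := by
  rcases lt_or_gt_of_ne hp2 with h | h
  · exact ks_core hp0 h x
  · have h' := ks_core (p := 1-p) (by linarith) (by linarith) (-x)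
    have e0 : (1:ℝ) - (1-p) = p := by ring
    rw [e0] at h'
    have elog : Real.log (p/(1-p)) = - Real.log ((1-p)/p) := by
      rw [← Real.log_inv, inv_div]
    rw [elog] at h'
    have h1p : (0:ℝ) < 1 - p := by linarith
    have epos : (0:ℝ) < p + (1-p)*Real.exp (-x) := by positivity
    have emul : 1 - p + p*Real.exp x = Real.exp x * (p + (1-p)*Real.exp (-x)) := by
      rw [Real.exp_neg]
      field_simp
      ring
    rw [emul, Real.log_mul (Real.exp_ne_zero x) epos.ne', Real.log_exp]
    have heq : (-x)^2 * ((1 - 2*(1-p)) / (4 * -Real.log ((1-p)/p)))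
        = x^2 * ((1 - 2*p) / (4 * Real.log ((1-p)/p))) := by
      ring
    rw [heq] at h'
    linarith

lemma mgf_le (hp0 : 0 < p) (hp1 : p < 1) (hp2 : p ≠ 1/2) (l : ℝ) :
    p * Real.exp (l*(1-p)) + (1-p) * Real.exp (l*(-p)) ≤
      Real.exp (l^2 * ((1-2*p)/(2*Real.log ((1-p)/p))) / 2) := by
  have key := ks_general hp0 hp1 hp2 l
  have h1p : (0:ℝ) < 1 - p := by linarith
  have hpos : 0 < 1 - p + p * Real.exp l := by positivity
  have lhs_eq : p * Real.exp (l*(1-p)) + (1-p)*Real.exp (l*(-p))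
      = Real.exp (Real.log (1 - p + p*Real.exp l) - p*l) := by
    rw [Real.exp_sub, Real.exp_log hpos]
    rw [show l*(1-p) = l - p*l by ring, Real.exp_sub, show l*(-p) = -(p*l) by ring,
      Real.exp_neg]
    field_simp
    ring
  rw [lhs_eq]
  apply Real.exp_le_exp.2
  calc Real.log (1 - p + p*Real.exp l) - p*l
      ≤ l^2 * ((1 - 2*p) / (4 * Real.log ((1-p)/p))) := key
    _ = l^2 * ((1-2*p)/(2*Real.log ((1-p)/p))) / 2 := by ring

lemma mgf_eq (hp0 : 0 < p) (hp1 : p < 1) :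
    p * Real.exp ((2*Real.log ((1-p)/p))*(1-p)) + (1-p)*Real.exp ((2*Real.log ((1-p)/p))*(-p))
      = Real.exp (Real.log ((1-p)/p) * (1-2*p)) := by
  have h1p : (0:ℝ) < 1 - p := by linarith
  set L : ℝ := Real.log ((1-p)/p) with hLdef
  have hEL : Real.exp L = (1-p)/p := Real.exp_log (by positivity)
  have hexp2L : Real.exp (2*L) = ((1-p)/p)^2 := by
    rw [two_mul, Real.exp_add, hEL]; ring
  have e1 : (2*L)*(1-p) = -(2*L*p) + 2*L := by ring
  have e2 : (2*L)*(-p) = -(2*L*p) := by ring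
  have e3 : L*(1-2*p) = -(2*L*p) + L := by ring
  rw [e1, e2, e3, Real.exp_add, Real.exp_add, hexp2L, hEL]
  field_simp
  ring



lemma integral_exp_bernoulli {Ω : Type*} [MeasurableSpace Ω] (μ : Measure Ω)
    [IsProbabilityMeasure μ] (ξ : Ω → ℝ) (hmeas : Measurable ξ) (p : ℝ)
    (hp : p ∈ Set.Ioo (0 : ℝ) 1)
    (h1 : μ {ω | ξ ω = 1 - p} = ENNReal.ofReal p)
    (h2 : μ {ω | ξ ω = -p} = ENNReal.ofReal (1 - p)) (l : ℝ) :
    ∫ ω, Real.exp (l * ξ ω) ∂μ = p * Real.exp (l*(1-p)) + (1-p) * Real.exp (l*(-p)) := by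
  obtain ⟨hp0, hp1⟩ := hp
  have h1p : (0:ℝ) < 1 - p := by linarith
  set A := {ω | ξ ω = 1 - p} with hA
  set B := {ω | ξ ω = -p} with hB
  have hAme : MeasurableSet A := hmeas (measurableSet_singleton (1-p))
  have hBme : MeasurableSet B := hmeas (measurableSet_singleton (-p))
  have hne : (1:ℝ) - p ≠ -p := by intro h; linarith [h]
  have hdisj : Disjoint A B := by
    rw [Set.disjoint_left]
    intro ω hωA hωB
    exact hne (by rw [← hωA, ← hωB])
  have hunion : μ (A ∪ B) = 1 := by
    rw [measure_union hdisj hBme, h1, h2, ← ENNReal.ofReal_add hp0.le h1p.le]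
    norm_num
  have hcompl : μ (A ∪ B)ᶜ = 0 := by
    have := measure_compl (hAme.union hBme) (measure_ne_top μ _)
    rw [hunion, measure_univ] at this
    simpa using this
  have hae : ∀ᵐ ω ∂μ, Real.exp (l * ξ ω) =
      (A.indicator (fun _ => Real.exp (l*(1-p))) ω + B.indicator (fun _ => Real.exp (l*(-p))) ω) := by
    rw [ae_iff]
    apply measure_mono_null _ hcompl
    intro ω hω
    simp only [Set.mem_setOf_eq] at hω
    simp only [Set.mem_compl_iff, Set.mem_union]
    intro hcon
    apply hω
    rcases hcon with hωA | hωB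
    · have hωB' : ω ∉ B := Set.disjoint_left.1 hdisj hωA
      rw [Set.indicator_of_mem hωA, Set.indicator_of_notMem hωB']
      have hv : ξ ω = 1 - p := hωA
      rw [hv]
      ring
    · have hωA' : ω ∉ A := Set.disjoint_right.1 hdisj hωB
      rw [Set.indicator_of_mem hωB, Set.indicator_of_notMem hωA']
      have hv : ξ ω = -p := hωB
      rw [hv]
      ring
  rw [integral_congr_ae hae]
  have hiA : Integrable (A.indicator (fun _ => Real.exp (l*(1-p)))) μ :=
    (integrable_const _).indicator hAme
  have hiB : Integrable (B.indicator (fun _ => Real.exp (l*(-p)))) μ :=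
    (integrable_const _).indicator hBme
  rw [integral_add hiA hiB, integral_indicator_const _ hAme, integral_indicator_const _ hBme,
    measureReal_def, measureReal_def, h1, h2, ENNReal.toReal_ofReal hp0.le, ENNReal.toReal_ofReal h1p.le]
  simp [smul_eq_mul]

/-- The subgaussian norm of a random variable `ξ`. -/
noncomputable def subgNorm {Ω : Type*} [MeasurableSpace Ω] (μ : Measure Ω) (ξ : Ω → ℝ) : ℝ :=
  sInf {τ : ℝ | 0 ≤ τ ∧ ∀ l : ℝ, ∫ ω, Real.exp (l * ξ ω) ∂μ ≤ Real.exp (l ^ 2 * τ ^ 2 / 2)}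

theorem subgNorm_centered_bernoulli {Ω : Type*} [MeasurableSpace Ω] (μ : Measure Ω)
    [IsProbabilityMeasure μ] (ξ : Ω → ℝ) (hmeas : Measurable ξ) (p : ℝ)
    (hp : p ∈ Set.Ioo (0 : ℝ) 1) (hp2 : p ≠ 1 / 2)
    (h1 : μ {ω | ξ ω = 1 - p} = ENNReal.ofReal p)
    (h2 : μ {ω | ξ ω = -p} = ENNReal.ofReal (1 - p)) :
    subgNorm μ ξ = Real.sqrt ((1 - 2 * p) / (2 * Real.log ((1 - p) / p))) := by
  obtain ⟨hp0, hp1⟩ := hp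
  have h1p : (0:ℝ) < 1 - p := by linarith
  have hIE := integral_exp_bernoulli μ ξ hmeas p ⟨hp0, hp1⟩ h1 h2
  set L : ℝ := Real.log ((1-p)/p) with hLdef
  have hLne : L ≠ 0 := by
    intro h
    rcases (Real.log_eq_zero).1 h with h' | h' | h'
    · rw [div_eq_iff hp0.ne'] at h'; simp at h'; linarith
    · rw [div_eq_iff hp0.ne'] at h'; apply hp2; linarith
    · rw [div_eq_iff hp0.ne'] at h'; nlinarith
  have hτsq_pos : 0 < (1 - 2*p)/(2*L) := by
    rcases lt_or_gt_of_ne hp2 with h | h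
    · apply div_pos (by linarith)
      have : 0 < L := Real.log_pos (by rw [lt_div_iff₀ hp0]; linarith)
      linarith
    · rw [div_pos_iff]
      right
      have : L < 0 := Real.log_neg (by positivity) (by rw [div_lt_one hp0]; linarith)
      constructor <;> linarith
  have hsq : Real.sqrt ((1 - 2*p)/(2*L)) ^ 2 = (1 - 2*p)/(2*L) :=
    Real.sq_sqrt hτsq_pos.le
  set S := {τ : ℝ | 0 ≤ τ ∧ ∀ l : ℝ, ∫ ω, Real.exp (l * ξ ω) ∂μ ≤ Real.exp (l ^ 2 * τ ^ 2 / 2)}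
    with hSdef
  have hmem : Real.sqrt ((1 - 2*p)/(2*L)) ∈ S := by
    constructor
    · exact Real.sqrt_nonneg _
    · intro l
      rw [hIE l, hsq]
      have := mgf_le hp0 hp1 hp2 l
      calc p * Real.exp (l*(1-p)) + (1-p) * Real.exp (l*(-p))
          ≤ Real.exp (l^2 * ((1-2*p)/(2*L)) / 2) := this
        _ = Real.exp (l^2 * ((1-2*p)/(2*L)) / 2) := rfl
  have hlb : ∀ τ ∈ S, Real.sqrt ((1 - 2*p)/(2*L)) ≤ τ := by
    intro τ hτ
    obtain ⟨hτ0, hτle⟩ := hτ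
    have hs := hτle (2*L)
    rw [hIE (2*L), mgf_eq hp0 hp1] at hs
    have hexp := Real.exp_le_exp.1 hs
    have hL2 : 0 < 2*L^2 := by positivity
    have hkey : (1 - 2*p)/(2*L) ≤ τ^2 := by
      have e : (1-2*p)/(2*L) * (2*L^2) = L*(1-2*p) := by
        field_simp
      have h' : (1-2*p)/(2*L) * (2*L^2) ≤ τ^2 * (2*L^2) := by
        rw [e]
        nlinarith [hexp]
      exact le_of_mul_le_mul_right h' hL2
    calc Real.sqrt ((1 - 2*p)/(2*L)) ≤ Real.sqrt (τ^2) := Real.sqrt_le_sqrt hkey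
      _ = τ := by rw [Real.sqrt_sq hτ0]
  rw [subgNorm]
  apply le_antisymm
  · exact csInf_le ⟨0, fun τ hτ => hτ.1⟩ hmem
  · exact le_csInf ⟨_, hmem⟩ hlb
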